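/- For N ≥ 2 and l_min = 1, the sequence of rank probabilities of random typing p_i = ((1−p_s)/N)^{l_i} · p_s/(1−p_s) with l_i = ⌈log_N((1−1/N)i + 1)⌉ is nonincreasing in i. -/
import Mathlib


/-- For `N ≥ 2` and `l_min = 1`, the rank probabilities of random typing
`p_i = ((1−p_s)/N)^{l_i} · p_s/(1−p_s)` with
`l_i = ⌈log_N((1 − 1/N)·i + 1)⌉` form a nonincreasing sequence in the rank. -/
theorem stmt19 (N : ℕ) (hN : 2 ≤ N) (ps : ℝ) (h0 : 0 < ps) (h1 : ps < 1) :
    ∀ i j : ℕ, 1 ≤ i → i ≤ j →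
      ((1 - ps) / N) ^ (⌈Real.logb N ((1 - 1 / (N : ℝ)) * j + 1)⌉).toNat *
          (ps / (1 - ps)) ≤
        ((1 - ps) / N) ^ (⌈Real.logb N ((1 - 1 / (N : ℝ)) * i + 1)⌉).toNat *
          (ps / (1 - ps)) := by
  intro i j hi hij
  have hN1 : (1 : ℝ) < N := by exact_mod_cast lt_of_lt_of_le one_lt_two (by exact_mod_cast hN)
  have hN0 : (0 : ℝ) < N := by linarith
  have hc : (0 : ℝ) ≤ 1 - 1 / (N : ℝ) := by
    have : 1 / (N : ℝ) ≤ 1 := by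
      rw [div_le_one hN0]; linarith
    linarith
  have hargpos : (0 : ℝ) < (1 - 1 / (N : ℝ)) * i + 1 := by
    have : (0:ℝ) ≤ (1 - 1 / (N : ℝ)) * i := mul_nonneg hc (Nat.cast_nonneg i)
    linarith
  have harg : (1 - 1 / (N : ℝ)) * i + 1 ≤ (1 - 1 / (N : ℝ)) * j + 1 := by
    have : (i : ℝ) ≤ j := by exact_mod_cast hij
    nlinarith
  have hlog : Real.logb N ((1 - 1 / (N : ℝ)) * i + 1) ≤
      Real.logb N ((1 - 1 / (N : ℝ)) * j + 1) :=
    Real.logb_le_logb_of_le hN1 hargpos harg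
  have hexp : (⌈Real.logb N ((1 - 1 / (N : ℝ)) * i + 1)⌉).toNat ≤
      (⌈Real.logb N ((1 - 1 / (N : ℝ)) * j + 1)⌉).toNat :=
    Int.toNat_le_toNat (Int.ceil_le_ceil hlog)
  have hr0 : (0 : ℝ) ≤ (1 - ps) / N := div_nonneg (by linarith) hN0.le
  have hr1 : (1 - ps) / N ≤ 1 := by
    rw [div_le_one hN0]; linarith
  have := pow_le_pow_of_le_one hr0 hr1 hexp
  have hps : (0 : ℝ) ≤ ps / (1 - ps) := div_nonneg h0.le (by linarith)
  exact mul_le_mul_of_nonneg_right this hps
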